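/- Let b ∈ ℕ and β ∈ [1,2). Let c : ℕ → [0,1] satisfy ∑_{i=0}^∞ c_i/2^i = 1/(β·2^b), and let α : ℕ → [0,1] satisfy ∑_{i=0}^∞ α_i·c_i/2^i = 1/(β·2^{b+1}). Then there exist indices s₁, s₂ ≤ 2^{b+4} (possibly s₁ = s₂) such that c_{s₁} > 1/2^{2(b+5)}, c_{s₂} > 1/2^{2(b+5)}, α_{s₁} > 1/2^{2(b+5)}, and α_{s₂} < 3/4. -/

import Mathlib

lemma aux_tsum_le (f : ℕ → ℝ) (h0 : ∀ i, 0 ≤ f i) (h1 : ∀ i, f i ≤ (1/2)^i) (n : ℕ) :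
    ∑' i, f i ≤ (∑ i ∈ Finset.range n, f i) + 2 * (1/2)^n := by
  have hs : Summable f := Summable.of_nonneg_of_le h0 h1 summable_geometric_two
  rw [← Summable.sum_add_tsum_nat_add n hs]
  have htail : ∑' i, f (i + n) ≤ ∑' i, (1/2:ℝ)^(i+n) := by
    refine Summable.tsum_le_tsum (fun i => h1 _) ((summable_nat_add_iff n).2 hs) ?_
    exact (summable_nat_add_iff n).2 summable_geometric_two
  have heq : ∑' i, (1/2:ℝ)^(i+n) = 2 * (1/2)^n := by
    simp only [pow_add]
    rw [tsum_mul_right, tsum_geometric_two]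
  linarith [heq ▸ htail]

lemma aux_sum_le (f : ℕ → ℝ) (h0 : ∀ i, 0 ≤ f i) (h1 : ∀ i, f i ≤ (1/2)^i) (n : ℕ) :
    (∑ i ∈ Finset.range n, f i) ≤ ∑' i, f i := by
  have hs : Summable f := Summable.of_nonneg_of_le h0 h1 summable_geometric_two
  exact Summable.sum_le_tsum _ (fun i _ => h0 i) hs

lemma aux_geom_sum_le (n : ℕ) : (∑ i ∈ Finset.range n, (1/2:ℝ)^i) ≤ 2 := by
  have := Summable.sum_le_tsum (Finset.range n) (fun i _ => by positivity) summable_geometric_two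
  exact this.trans (le_of_eq tsum_geometric_two)

set_option maxHeartbeats 1000000

/-- If `∑ cᵢ/2ⁱ = 1/(β·2ᵇ)` and `∑ αᵢcᵢ/2ⁱ = 1/(β·2^{b+1})` with `c, α` valued in `[0,1]`,
then there are indices `s₁, s₂ ≤ 2^{b+4}` with `c_{s₁}, c_{s₂}, α_{s₁} > 1/2^{2(b+5)}`
and `α_{s₂} < 3/4`. -/
theorem exists_s_indices (b : ℕ) (β : ℝ) (hβ : β ∈ Set.Ico (1 : ℝ) 2)
    (c α : ℕ → ℝ)
    (hc : ∀ i, c i ∈ Set.Icc (0 : ℝ) 1) (hα : ∀ i, α i ∈ Set.Icc (0 : ℝ) 1)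
    (hcsum : (∑' i : ℕ, c i / 2 ^ i) = 1 / (β * 2 ^ b))
    (hαsum : (∑' i : ℕ, α i * c i / 2 ^ i) = 1 / (β * 2 ^ (b + 1))) :
    ∃ s₁ s₂ : ℕ, s₁ ≤ 2 ^ (b + 4) ∧ s₂ ≤ 2 ^ (b + 4) ∧
      1 / 2 ^ (2 * (b + 5)) < c s₁ ∧ 1 / 2 ^ (2 * (b + 5)) < c s₂ ∧
      1 / 2 ^ (2 * (b + 5)) < α s₁ ∧ α s₂ < 3 / 4 := by
  obtain ⟨hβ1, hβ2⟩ := hβ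
  have hβ0 : (0:ℝ) < β := lt_of_lt_of_le one_pos hβ1
  set N : ℕ := 2^(b+4) with hNdef
  set ε : ℝ := 1 / 2 ^ (2 * (b + 5)) with hεdef
  have hεeq : ε = (1/2:ℝ)^(2*(b+5)) := by rw [hεdef, one_div_pow]
  have hεpos : 0 < ε := by rw [hεdef]; positivity
  have hf0 : ∀ i, 0 ≤ c i / 2^i := fun i => div_nonneg (hc i).1 (by positivity)
  have hf1 : ∀ i, c i / 2^i ≤ (1/2:ℝ)^i := by
    intro i
    rw [one_div_pow]
    gcongr
    exact (hc i).2
  have hg0 : ∀ i, 0 ≤ α i * c i / 2^i :=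
    fun i => div_nonneg (mul_nonneg (hα i).1 (hc i).1) (by positivity)
  have hg1 : ∀ i, α i * c i / 2^i ≤ (1/2:ℝ)^i := by
    intro i
    rw [one_div_pow]
    gcongr
    exact mul_le_one₀ (hα i).2 (hc i).1 (hc i).2
  -- numeric facts
  have hNb : b + 4 ≤ N := (Nat.lt_two_pow_self (n := b+4)).le
  have hpowN : (1/2:ℝ)^N ≤ (1/2)^(b+4) :=
    pow_le_pow_of_le_one (by norm_num) (by norm_num) hNb
  have h2ε : 2 * ε ≤ (1/2:ℝ)^(b+4) := by
    rw [hεeq, show 2*(b+5) = (2*b+9)+1 by ring, pow_succ]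
    have : (1/2:ℝ)^(2*b+9) ≤ (1/2)^(b+4) :=
      pow_le_pow_of_le_one (by norm_num) (by norm_num) (by omega)
    linarith
  have hpow14 : (1/2:ℝ)^(b+4) = (1/2)^(b+1)/8 := by
    rw [show b+4 = (b+1)+3 by ring, pow_add]; ring
  have hpow12 : (1/2:ℝ)^(b+2) = (1/2)^(b+1)/2 := by
    rw [show b+2 = (b+1)+1 by ring, pow_succ]; ring
  have hpow1pos : (0:ℝ) < (1/2)^(b+1) := by positivity
  have hS1lb : (1/2:ℝ)^(b+1) < 1/(β*2^b) := by
    have h2b : (0:ℝ) < 2^b := by positivity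
    have e : (2:ℝ)^(b+1) = 2^b*2 := pow_succ 2 b
    have hlt : β*2^b < 2^(b+1) := by nlinarith
    have := one_div_lt_one_div_of_lt (by positivity) hlt
    rw [one_div_pow]
    exact this
  have hS2lb : (1/2:ℝ)^(b+2) < 1/(β*2^(b+1)) := by
    have h2b : (0:ℝ) < 2^(b+1) := by positivity
    have e : (2:ℝ)^(b+2) = 2^(b+1)*2 := pow_succ 2 (b+1)
    have hlt : β*2^(b+1) < 2^(b+2) := by nlinarith
    have := one_div_lt_one_div_of_lt (by positivity) hlt
    rw [one_div_pow]
    exact this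
  have hkey : 2 * (1/(β*2^(b+1))) = 1/(β*2^b) := by
    have h2b : (2:ℝ)^b ≠ 0 := by positivity
    rw [pow_succ]
    field_simp
  have h2N1 : (2:ℝ)*(1/2)^(N+1) = (1/2)^N := by rw [pow_succ]; ring
  have hgeom : ∀ n : ℕ, (∑ i ∈ Finset.range n, (1/2:ℝ)^i) ≤ 2 := aux_geom_sum_le
  -- Claim A
  have hA : ∃ s, s ≤ N ∧ ε < α s * c s := by
    by_contra h
    push_neg at h
    have hhead : (∑ i ∈ Finset.range (N+1), α i * c i / 2^i) ≤ ε * 2 := by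
      calc (∑ i ∈ Finset.range (N+1), α i * c i / 2^i)
          ≤ ∑ i ∈ Finset.range (N+1), ε * (1/2:ℝ)^i := by
            refine Finset.sum_le_sum (fun i hi => ?_)
            have hi' : i ≤ N := Finset.mem_range_succ_iff.1 hi
            calc α i * c i / 2^i ≤ ε / 2^i := by
                  gcongr
                  exact h i hi'
              _ = ε * (1/2:ℝ)^i := by rw [one_div_pow, div_eq_mul_one_div, one_div]
        _ = ε * ∑ i ∈ Finset.range (N+1), (1/2:ℝ)^i := by rw [Finset.mul_sum]
        _ ≤ ε * 2 := by
            have := hgeom (N+1)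
            nlinarith
    have htot := aux_tsum_le _ hg0 hg1 (N+1)
    rw [hαsum, h2N1] at htot
    linarith
  -- Claim B
  have hB : ∃ s, s ≤ N ∧ ε < c s ∧ α s < 3/4 := by
    by_contra h
    push_neg at h
    have hpt : ∀ i ∈ Finset.range (N+1),
        (3/4) * (c i / 2^i) - (3/4) * (ε * (1/2:ℝ)^i) ≤ α i * c i / 2^i := by
      intro i hi
      have hi' : i ≤ N := Finset.mem_range_succ_iff.1 hi
      have hhalf : (0:ℝ) < (1/2:ℝ)^i := by positivity
      by_cases hci : ε < c i
      · have hαi : 3/4 ≤ α i := h i hi' hci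
        have h1 : (3/4) * (c i / 2^i) ≤ α i * c i / 2^i := by
          rw [mul_div_assoc]
          gcongr
          exact (hf0 i)
        nlinarith [hεpos.le, hhalf.le]
      · push_neg at hci
        have h1 : c i / 2^i ≤ ε * (1/2:ℝ)^i := by
          calc c i / 2^i ≤ ε / 2^i := by gcongr
            _ = ε * (1/2:ℝ)^i := by rw [one_div_pow, div_eq_mul_one_div, one_div]
        nlinarith [hg0 i]
    have hsum1 : (3/4) * (∑ i ∈ Finset.range (N+1), c i / 2^i)
        - (3/4) * ε * (∑ i ∈ Finset.range (N+1), (1/2:ℝ)^i)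
        ≤ ∑ i ∈ Finset.range (N+1), α i * c i / 2^i := by
      have h' := Finset.sum_le_sum hpt
      rw [Finset.sum_sub_distrib, ← Finset.mul_sum, ← Finset.mul_sum] at h'
      calc (3/4) * (∑ i ∈ Finset.range (N+1), c i / 2^i)
            - (3/4) * ε * (∑ i ∈ Finset.range (N+1), (1/2:ℝ)^i)
          = (3/4) * (∑ i ∈ Finset.range (N+1), c i / 2^i)
            - (3/4) * (∑ i ∈ Finset.range (N+1), ε * (1/2:ℝ)^i) := by
              rw [← Finset.mul_sum]; ring
        _ ≤ _ := h'
    have hheadg : (∑ i ∈ Finset.range (N+1), α i * c i / 2^i) ≤ 1/(β*2^(b+1)) := by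
      rw [← hαsum]; exact aux_sum_le _ hg0 hg1 (N+1)
    have hheadf : 1/(β*2^b) ≤ (∑ i ∈ Finset.range (N+1), c i / 2^i) + (1/2:ℝ)^N := by
      have h' := aux_tsum_le _ hf0 hf1 (N+1)
      rw [hcsum, h2N1] at h'
      linarith
    have hgs := hgeom (N+1)
    have hgs0 : (0:ℝ) ≤ ∑ i ∈ Finset.range (N+1), (1/2:ℝ)^i :=
      Finset.sum_nonneg (fun i _ => by positivity)
    have hεT : (3/4) * ε * (∑ i ∈ Finset.range (N+1), (1/2:ℝ)^i) ≤ (3/2) * ε := by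
      nlinarith [hεpos.le]
    linarith
  obtain ⟨s₁, hs₁N, hs₁⟩ := hA
  obtain ⟨s₂, hs₂N, hs₂c, hs₂α⟩ := hB
  refine ⟨s₁, s₂, hs₁N, hs₂N, ?_, hs₂c, ?_, hs₂α⟩
  · exact lt_of_lt_of_le hs₁ (mul_le_of_le_one_left (hc s₁).1 (hα s₁).2)
  · exact lt_of_lt_of_le hs₁ (mul_le_of_le_one_right (hα s₁).1 (hc s₁).2)
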